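/- Let K_1, ..., K_{d+1} be nonempty compact convex sets in R^d such that there exist oriented hyperplanes G_1, ..., G_{d+1} with Δ = ∩_{i=1}^{d+1} G_i^- a nonempty bounded open set, and each K_i contained in the closure of ∩_{j ≠ i} G_j^+. Then for every selection of points x_1 ∈ K_1, ..., x_{d+1} ∈ K_{d+1}, the set Δ is contained in conv{x_1, ..., x_{d+1}}; in particular the intersection over all such selections of conv{x_1,...,x_{d+1}} has nonempty interior. -/

import Mathlib

open Set

/-- If nonempty compact convex sets `K_1, ..., K_{d+1}` are split by
oriented hyperplanes `G_1, ..., G_{d+1}` (with `Δ = ⋂ i, G_i⁻` a nonempty bounded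
open set and `K_i ⊆ closure (⋂_{j ≠ i} G_j⁺)`), then every colorful simplex
`conv{x_1, ..., x_{d+1}}` with `x_i ∈ K_i` contains `Δ`; in particular the
intersection of all these colorful simplices has nonempty interior. -/
theorem stmt4 (d : ℕ) (K : Fin (d + 1) → Set (Fin d → ℝ))
    (hKne : ∀ i, (K i).Nonempty) (hKcp : ∀ i, IsCompact (K i))
    (hKcv : ∀ i, Convex ℝ (K i))
    (f : Fin (d + 1) → (Fin d → ℝ) →ₗ[ℝ] ℝ) (c : Fin (d + 1) → ℝ)
    (hf : ∀ i, f i ≠ 0)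
    (hne : (⋂ i, {y : Fin d → ℝ | f i y < c i}).Nonempty)
    (hbd : Bornology.IsBounded (⋂ i, {y : Fin d → ℝ | f i y < c i}))
    (hK : ∀ i, K i ⊆ closure (⋂ j, ⋂ (_ : j ≠ i), {y : Fin d → ℝ | c j < f j y})) :
    (∀ x : Fin (d + 1) → Fin d → ℝ, (∀ i, x i ∈ K i) →
      (⋂ i, {y : Fin d → ℝ | f i y < c i}) ⊆ convexHull ℝ (Set.range x)) ∧
    (interior (⋂ (x : Fin (d + 1) → Fin d → ℝ) (_ : ∀ i, x i ∈ K i),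
      convexHull ℝ (Set.range x))).Nonempty := by
  obtain ⟨y₀, hy₀⟩ := hne
  rcases Nat.eq_zero_or_pos d with hd | hd
  · subst hd
    exact absurd (LinearMap.ext fun v => by
      rw [Subsingleton.elim v 0, map_zero]; rfl) (hf 0)
  haveI hnt : Nontrivial (Fin (d + 1)) := Fin.nontrivial_iff_two_le.mpr (by omega)
  have hy₀' : ∀ i, f i y₀ < c i := by simpa [Set.mem_iInter] using hy₀
  have hcont : ∀ i, Continuous (f i) := fun i => (f i).continuous_of_finiteDimensional
  obtain ⟨C, hC⟩ := isBounded_iff_forall_norm_le.mp hbd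
  -- recession cone is trivial
  have hrec : ∀ w : Fin d → ℝ, (∀ i, f i w ≤ 0) → w = 0 := by
    intro w hw
    by_contra hw0
    have hwpos : 0 < ‖w‖ := norm_pos_iff.mpr hw0
    set t : ℝ := (|C| + ‖y₀‖ + 1) / ‖w‖ with ht
    have ht0 : 0 ≤ t := div_nonneg (by positivity) hwpos.le
    have hmem : y₀ + t • w ∈ ⋂ i, {y : Fin d → ℝ | f i y < c i} := by
      simp only [Set.mem_iInter, Set.mem_setOf_eq]
      intro i
      have h2 : f i (y₀ + t • w) = f i y₀ + t * f i w := by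
        rw [map_add, map_smul, smul_eq_mul]
      nlinarith [mul_nonpos_of_nonneg_of_nonpos ht0 (hw i), hy₀' i]
    have h3 := hC _ hmem
    have h4 : ‖t • w‖ ≤ ‖y₀ + t • w‖ + ‖y₀‖ := by
      have := norm_sub_le (y₀ + t • w) y₀
      simpa using this
    rw [norm_smul, Real.norm_eq_abs, abs_of_nonneg ht0] at h4
    have h5 : t * ‖w‖ = |C| + ‖y₀‖ + 1 := div_mul_cancel₀ _ hwpos.ne'
    have hCabs : C ≤ |C| := le_abs_self C
    nlinarith [norm_nonneg y₀]
  -- injectivity of d of the functionals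
  have hinj : ∀ (i : Fin (d + 1)) (w : Fin d → ℝ), (∀ j, j ≠ i → f j w = 0) → w = 0 := by
    intro i w hw
    rcases le_total (f i w) 0 with h | h
    · refine hrec w fun j => ?_
      rcases eq_or_ne j i with rfl | hji
      · exact h
      · rw [hw j hji]
    · have hneg := hrec (-w) (fun j => by
        rcases eq_or_ne j i with rfl | hji
        · rw [map_neg]; linarith
        · rw [map_neg, hw j hji, neg_zero])
      simpa [neg_eq_zero] using hneg
  -- vertices
  have hvert : ∀ i : Fin (d + 1), ∃ w : Fin d → ℝ, ∀ j, j ≠ i → f j w = c j := by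
    intro i
    set Φ : (Fin d → ℝ) →ₗ[ℝ] (Fin d → ℝ) := LinearMap.pi (fun k => f (i.succAbove k)) with hΦ
    have hΦinj : Function.Injective Φ := by
      rw [← LinearMap.ker_eq_bot, LinearMap.ker_eq_bot']
      intro w hw
      refine hinj i w fun j hj => ?_
      obtain ⟨k, hk⟩ := Fin.exists_succAbove_eq hj
      have hk0 : Φ w k = 0 := by rw [hw]; rfl
      rw [← hk]; exact hk0
    have hΦsurj : Function.Surjective Φ := LinearMap.injective_iff_surjective.mp hΦinj
    obtain ⟨w, hw⟩ := hΦsurj (fun k => c (i.succAbove k))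
    refine ⟨w, fun j hj => ?_⟩
    obtain ⟨k, hk⟩ := Fin.exists_succAbove_eq hj
    have hk0 : Φ w k = c (i.succAbove k) := by rw [hw]
    rw [← hk]; exact hk0
  choose v hv using hvert
  have hvlt : ∀ i, f i (v i) < c i := by
    intro i
    by_contra hge
    push_neg at hge
    obtain ⟨j, hj⟩ := exists_ne i
    have hu : y₀ - v i = 0 := by
      refine hrec _ fun k => ?_
      rcases eq_or_ne k i with rfl | hk
      · rw [map_sub]; linarith [hy₀' k]
      · rw [map_sub, hv i k hk]; linarith [hy₀' k]
    have h2 : f j (y₀ - v i) = f j y₀ - c j := by rw [map_sub, hv i j hj]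
    rw [hu, map_zero] at h2
    linarith [hy₀' j]
  have hD : ∀ i, 0 < c i - f i (v i) := fun i => by linarith [hvlt i]
  -- main containment
  have main : ∀ x : Fin (d + 1) → Fin d → ℝ, (∀ i, x i ∈ K i) →
      (⋂ i, {y : Fin d → ℝ | f i y < c i}) ⊆ convexHull ℝ (Set.range x) := by
    intro x hx y hy
    have hyΔ : ∀ i, f i y < c i := by simpa [Set.mem_iInter] using hy
    have hxge : ∀ i j, j ≠ i → c j ≤ f j (x i) := by
      intro i j hj
      have h1 := hK i (hx i)
      have h2 : closure (⋂ j, ⋂ (_ : j ≠ i), {y : Fin d → ℝ | c j < f j y}) ⊆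
          ⋂ j, ⋂ (_ : j ≠ i), {y : Fin d → ℝ | c j ≤ f j y} := by
        refine closure_minimal (Set.iInter₂_mono fun j hj =>
          Set.setOf_subset_setOf.mpr fun z hz => le_of_lt hz) ?_
        exact isClosed_iInter fun j => isClosed_iInter fun _ =>
          isClosed_le continuous_const (hcont j)
      have := h2 h1
      simp only [Set.mem_iInter, Set.mem_setOf_eq] at this
      exact this j hj
    set t : Fin (d + 1) → Fin (d + 1) → ℝ :=
      fun i j => if j = i then 0 else (f j (x i) - c j) / (c j - f j (v j)) with htdef
    have htnn : ∀ i j, 0 ≤ t i j := by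
      intro i j
      rcases eq_or_ne j i with rfl | hj
      · simp [htdef]
      · simp only [htdef, if_neg hj]
        exact div_nonneg (by linarith [hxge i j hj]) (hD j).le
    have hxdec : ∀ i, x i = v i + ∑ j, t i j • (v i - v j) := by
      intro i
      have h0 : x i - (v i + ∑ j, t i j • (v i - v j)) = 0 := by
        refine hinj i _ fun k hk => ?_
        have hsum : f k (∑ j, t i j • (v i - v j)) = f k (x i) - c k := by
          rw [map_sum]
          have hterm : ∀ j, f k (t i j • (v i - v j)) =
              if j = k then f k (x i) - c k else 0 := by
            intro j
            rcases eq_or_ne j k with rfl | hjk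
            · rw [if_pos rfl, map_smul, map_sub, hv i _ hk, smul_eq_mul]
              rw [htdef]
              simp only [if_neg hk]
              exact div_mul_cancel₀ _ (hD _).ne'
            · rw [if_neg hjk]
              rcases eq_or_ne j i with rfl | hji
              · simp
              · rw [map_smul, map_sub, hv i k hk, hv j k (Ne.symm hjk), sub_self,
                  smul_eq_mul, mul_zero]
          simp only [hterm]
          simp
        rw [map_sub, map_add, hv i k hk, hsum]
        ring
      have := sub_eq_zero.mp h0
      exact this
    set s : Fin (d + 1) → ℝ := fun i => (c i - f i y) / (c i - f i (v i)) with hsdef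
    have hs0 : ∀ i, 0 < s i := fun i => div_pos (by linarith [hyΔ i]) (hD i)
    have hsmul : ∀ i, s i * (f i (v i) - c i) = f i y - c i := by
      intro i
      have h : s i * (c i - f i (v i)) = c i - f i y := by
        rw [hsdef]
        exact div_mul_cancel₀ _ (hD i).ne'
      nlinarith [h]
    have hkey : ∀ j, f j (∑ i, s i • v i) = (∑ i, s i) * c j + (f j y - c j) := by
      intro j
      rw [map_sum]
      have hterm : ∀ i, f j (s i • v i) =
          s i * c j + (if i = j then f j y - c j else 0) := by
        intro i
        rcases eq_or_ne i j with rfl | hij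
        · rw [if_pos rfl, map_smul, smul_eq_mul]
          have := hsmul i
          nlinarith [this]
        · rw [if_neg hij, map_smul, hv i j (Ne.symm hij), smul_eq_mul, add_zero]
      simp only [hterm]
      rw [Finset.sum_add_distrib, ← Finset.sum_mul, Finset.sum_ite_eq' Finset.univ j]
      simp
    have hdiff : ∀ j, f j ((∑ i, s i • v i) - y) = ((∑ i, s i) - 1) * c j := by
      intro j
      rw [map_sub, hkey]
      ring
    have hσ1 : (∑ i, s i) = 1 := by
      by_contra hσne
      have hτ : (∑ i, s i) - 1 ≠ 0 := sub_ne_zero.mpr hσne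
      set q : Fin d → ℝ := ((∑ i, s i) - 1)⁻¹ • ((∑ i, s i • v i) - y) with hq
      have hqc : ∀ j, f j q = c j := by
        intro j
        rw [hq, map_smul, hdiff, smul_eq_mul]
        field_simp
      have hq0 : ∀ i : Fin (d + 1), q = v i := by
        intro i
        have := hinj i (q - v i) (fun j hj => by rw [map_sub, hqc, hv i j hj, sub_self])
        exact sub_eq_zero.mp this
      obtain ⟨i₀, i₁, hne01⟩ := exists_pair_ne (Fin (d + 1))
      have h01 : v i₀ = v i₁ := (hq0 i₀).symm.trans (hq0 i₁)
      have hc : f i₀ (v i₁) = c i₀ := hv i₁ i₀ hne01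
      rw [← h01] at hc
      exact absurd hc (ne_of_lt (hvlt i₀))
    have hyz : (∑ i, s i • v i) = y := by
      refine sub_eq_zero.mp (hrec _ fun j => ?_)
      rw [hdiff, hσ1]
      ring_nf
      exact le_refl 0
    by_contra hyc
    obtain ⟨g, u, hgy, hgx⟩ := geometric_hahn_banach_point_closed
      (convex_convexHull ℝ _) ((Set.finite_range x).isClosed_convexHull (𝕜 := ℝ)) hyc
    have hgxlt : ∀ i, u < g (x i) :=
      fun i => hgx _ (subset_convexHull ℝ _ (Set.mem_range_self i))
    obtain ⟨i₀, -, hmin⟩ := Finset.exists_min_image Finset.univ (fun i => g (v i))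
      ⟨Classical.arbitrary _, Finset.mem_univ _⟩
    have h1 : g (x i₀) ≤ g (v i₀) := by
      rw [hxdec i₀, map_add, map_sum]
      have hterm : ∀ j, g (t i₀ j • (v i₀ - v j)) ≤ 0 := by
        intro j
        rw [map_smul, map_sub, smul_eq_mul]
        exact mul_nonpos_of_nonneg_of_nonpos (htnn i₀ j)
          (by linarith [hmin j (Finset.mem_univ j)])
      have hsum : (∑ j, g (t i₀ j • (v i₀ - v j))) ≤ 0 :=
        Finset.sum_nonpos fun j _ => hterm j
      linarith
    have h2 : g (v i₀) ≤ g y := by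
      rw [← hyz, map_sum]
      calc g (v i₀) = ∑ j, s j * g (v i₀) := by rw [← Finset.sum_mul, hσ1, one_mul]
        _ ≤ ∑ j, g (s j • v j) := by
            refine Finset.sum_le_sum fun j _ => ?_
            rw [map_smul, smul_eq_mul]
            exact mul_le_mul_of_nonneg_left (hmin j (Finset.mem_univ j)) (hs0 j).le
    linarith [hgxlt i₀]
  refine ⟨main, ?_⟩
  have hopen : IsOpen (⋂ i, {y : Fin d → ℝ | f i y < c i}) :=
    isOpen_iInter_of_finite fun i => isOpen_lt (hcont i) continuous_const
  have hsub : (⋂ i, {y : Fin d → ℝ | f i y < c i}) ⊆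
      ⋂ (x : Fin (d + 1) → Fin d → ℝ) (_ : ∀ i, x i ∈ K i), convexHull ℝ (Set.range x) :=
    Set.subset_iInter₂ fun x hx => main x hx
  exact ⟨y₀, interior_maximal hsub hopen hy₀⟩
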